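/- Suppose {f_n} and {g_n} are sequences of complex numbers such that f_n = ∑_{r=0}^{⌊n/2⌋} C(n, r) g_{n-2r} for all n ≥ 0. Then g_n = ∑_{r=0}^{⌊n/2⌋} D_n^r f_{n-2r} for all n ≥ 0, where D_n^r = (-1)^r (C(n-r, r) + C(n-r-1, r-1)). -/

import Mathlib

/-- Binomial coefficient `C(n,r)` for integer arguments: zero if `r < 0` or
`0 ≤ n < r`, the usual binomial for `0 ≤ r ≤ n`, and the generalized binomial
for negative upper index. -/
def C (n r : ℤ) : ℤ :=
  if r < 0 then 0
  else if 0 ≤ n then (n.toNat.choose r.toNat : ℤ)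
  else (-1) ^ r.toNat * ((r - n - 1).toNat.choose r.toNat : ℤ)

def D (n r : ℤ) : ℤ := (-1) ^ r.toNat * (C (n - r) r + C (n - r - 1) (r - 1))


lemma C_neg_right (n r : ℤ) (h : r < 0) : C n r = 0 := by simp [C, h]

lemma C_zero_right (n : ℤ) : C n 0 = 1 := by
  unfold C
  split_ifs with h1 h2 <;> simp at * <;> omega

lemma C_natCast (n r : ℕ) : C n r = (n.choose r : ℤ) := by
  simp [C]

lemma C_eq_zero_of_lt {n r : ℤ} (h0 : 0 ≤ n) (h : n < r) : C n r = 0 := by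
  unfold C
  rw [if_neg (by omega), if_pos h0]
  rw [Nat.choose_eq_zero_of_lt (by omega)]
  simp

lemma C_pascal (n r : ℤ) (hr : 0 ≤ r) : C n r = C (n-1) r + C (n-1) (r-1) := by
  rcases eq_or_lt_of_le hr with h0 | h1
  · rw [← h0]
    have : C (n-1) (0-1) = 0 := C_neg_right _ _ (by norm_num)
    rw [this, C_zero_right, C_zero_right, add_zero]
  · -- r ≥ 1
    rcases lt_trichotomy n 0 with hn | hn | hn
    · -- n ≤ -1
      unfold C
      rw [if_neg (by omega), if_neg (by omega), if_neg (by omega),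
          if_neg (by omega), if_neg (by omega), if_neg (by omega)]
      obtain ⟨s, hs⟩ : ∃ s : ℕ, r.toNat = s + 1 := ⟨r.toNat - 1, by omega⟩
      have h1' : (r-1).toNat = s := by omega
      set a : ℕ := (r - n - 1).toNat with ha
      have hb : (r - (n-1) - 1).toNat = a + 1 := by omega
      have hc : ((r-1) - (n-1) - 1).toNat = a := by omega
      rw [hs, h1', hb, hc]
      rw [Nat.choose_succ_succ]
      push_cast
      ring
    · -- n = 0
      subst hn
      unfold C
      rw [if_neg (by omega), if_pos (by omega), if_neg (by omega),
          if_neg (by omega), if_neg (by omega), if_neg (by omega)]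
      obtain ⟨s, hs⟩ : ∃ s : ℕ, r.toNat = s + 1 := ⟨r.toNat - 1, by omega⟩
      have h1' : (r-1).toNat = s := by omega
      have ha : (r - (0-1) - 1).toNat = s + 1 := by omega
      have hb : ((r-1) - (0-1) - 1).toNat = s := by omega
      rw [hs, h1', ha, hb, Nat.choose_self, Nat.choose_self,
          Nat.choose_eq_zero_of_lt (by omega)]
      push_cast
      ring
    · -- n ≥ 1
      unfold C
      rw [if_neg (by omega), if_pos (by omega), if_neg (by omega),
          if_pos (by omega), if_neg (by omega), if_pos (by omega)]
      obtain ⟨m, hm⟩ : ∃ m : ℕ, n.toNat = m + 1 := ⟨n.toNat - 1, by omega⟩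
      obtain ⟨s, hs⟩ : ∃ s : ℕ, r.toNat = s + 1 := ⟨r.toNat - 1, by omega⟩
      have h1' : (r-1).toNat = s := by omega
      have h2' : (n-1).toNat = m := by omega
      rw [hm, hs, h1', h2', Nat.choose_succ_succ]
      push_cast
      ring

lemma D_zero (n : ℤ) : D n 0 = 1 := by
  unfold D
  rw [C_neg_right _ _ (by norm_num : (0:ℤ)-1 < 0)]
  simp [C_zero_right]

lemma D_neg_one (n : ℤ) : D n (-1) = 0 := by
  unfold D
  rw [C_neg_right _ _ (by norm_num : (-1:ℤ) < 0),
      C_neg_right _ _ (by norm_num : (-1:ℤ)-1 < 0)]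
  simp

lemma D_rec (n r : ℤ) (hr : 0 ≤ r) : D n r = D (n-1) r - D (n-2) (r-1) := by
  rcases eq_or_lt_of_le hr with h0 | h1
  · rw [← h0]
    norm_num [D_zero, D_neg_one]
  · unfold D
    obtain ⟨s, hs⟩ : ∃ s : ℕ, r.toNat = s + 1 := ⟨r.toNat - 1, by omega⟩
    have h1' : (r-1).toNat = s := by omega
    rw [hs, h1']
    have e1 : C (n - r) r = C (n - r - 1) r + C (n - r - 1) (r-1) := C_pascal _ _ hr
    have e2 : C (n - r - 1) (r-1) = C (n - r - 2) (r-1) + C (n - r - 2) (r-1-1) := by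
      have := C_pascal (n - r - 1) (r-1) (by omega)
      convert this using 3 <;> ring
    have a1 : n - 1 - r = n - r - 1 := by ring
    have a2 : n - 1 - r - 1 = n - r - 2 := by ring
    have a3 : n - 2 - (r-1) = n - r - 1 := by ring
    have a4 : n - 2 - (r-1) - 1 = n - r - 2 := by ring
    have a5 : r - 1 - 1 = r - 2 := by ring
    rw [a2, a1, a4, a3, e1, e2]
    ring

def U (n : ℤ) (k : ℕ) : ℤ :=
  ∑ r ∈ Finset.range (k+1), D n r * C (n - 2*r) ((k : ℤ) - r)

lemma U_zero (n : ℤ) : U n 0 = 1 := by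
  simp [U, D_zero, C_zero_right]

lemma U_rec (n : ℤ) (j : ℕ) : U n (j+1) = U (n-1) (j+1) + U (n-1) j - U (n-2) j := by
  have step : ∀ r ∈ Finset.range (j+2),
      D n r * C (n - 2*r) (((j:ℤ)+1) - r) =
        D (n-1) r * C ((n-1) - 2*r) (((j:ℤ)+1) - r)
        + D (n-1) r * C ((n-1) - 2*r) ((j:ℤ) - r)
        - D (n-2) ((r:ℤ)-1) * C (n - 2*r) (((j:ℤ)+1) - r) := by
    intro r hr
    rw [D_rec n r (by positivity)]
    have hp : C (n - 2*r) (((j:ℤ)+1) - r)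
        = C (n - 2*r - 1) (((j:ℤ)+1) - r) + C (n - 2*r - 1) (((j:ℤ)+1) - r - 1) := by
      apply C_pascal
      simp only [Finset.mem_range] at hr
      omega
    have a1 : n - 2*(r:ℤ) - 1 = (n-1) - 2*r := by ring
    have a2 : ((j:ℤ)+1) - r - 1 = (j:ℤ) - r := by ring
    rw [hp, a1, a2]
    ring
  have hU : U n (j+1) = ∑ r ∈ Finset.range (j+2),
      (D (n-1) r * C ((n-1) - 2*r) (((j:ℤ)+1) - r)
        + D (n-1) r * C ((n-1) - 2*r) ((j:ℤ) - r)
        - D (n-2) ((r:ℤ)-1) * C (n - 2*r) (((j:ℤ)+1) - r)) := by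
    unfold U
    push_cast
    exact Finset.sum_congr rfl step
  have S1 : ∑ r ∈ Finset.range (j+2),
      D (n-1) r * C ((n-1) - 2*r) (((j:ℤ)+1) - r) = U (n-1) (j+1) := by
    unfold U
    apply Finset.sum_congr rfl
    intro r hr
    push_cast
    rfl
  have S2 : ∑ r ∈ Finset.range (j+2),
      D (n-1) r * C ((n-1) - 2*r) ((j:ℤ) - r) = U (n-1) j := by
    rw [Finset.sum_range_succ]
    have hz : C ((n-1) - 2*(((j+1:ℕ)):ℤ)) ((j:ℤ) - ((j+1:ℕ):ℤ)) = 0 :=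
      C_neg_right _ _ (by push_cast; omega)
    rw [hz, mul_zero, add_zero]
    unfold U
    rfl
  have S3 : ∑ r ∈ Finset.range (j+2),
      D (n-2) ((r:ℤ)-1) * C (n - 2*r) (((j:ℤ)+1) - r) = U (n-2) j := by
    rw [Finset.sum_range_succ']
    have h0 : D (n-2) (((0:ℕ):ℤ)-1) = 0 := by
      rw [Nat.cast_zero, zero_sub]; exact D_neg_one _
    rw [h0, zero_mul, add_zero]
    unfold U
    apply Finset.sum_congr rfl
    intro r hr
    have a1 : ((((r+1:ℕ)):ℤ)) - 1 = (r:ℤ) := by push_cast; ring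
    have a2 : n - 2*(((r+1:ℕ)):ℤ) = (n-2) - 2*(r:ℤ) := by push_cast; ring
    have a3 : ((j:ℤ)+1) - ((r+1:ℕ):ℤ) = (j:ℤ) - (r:ℤ) := by push_cast; ring
    rw [a1, a2, a3]
  rw [hU, Finset.sum_sub_distrib, Finset.sum_add_distrib, S1, S2, S3]

lemma C_natCast_eq_zero {n r : ℕ} (h : n < r) : C (n:ℤ) (r:ℤ) = 0 :=
  C_eq_zero_of_lt (by positivity) (by exact_mod_cast h)

lemma U_anchor (k : ℕ) (hk1 : 1 ≤ k) : U (k:ℤ) k = 0 := by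
  unfold U
  have key : ∀ r ∈ Finset.range (k+1),
      D (k:ℤ) r * C ((k:ℤ) - 2*r) ((k:ℤ) - r)
        = (if r = 0 then 1 else 0) + (if r = k then -1 else 0) := by
    intro r hr
    simp only [Finset.mem_range] at hr
    rcases eq_or_ne r 0 with h0 | h0
    · subst h0
      rw [if_pos rfl, if_neg (by omega)]
      simp only [Nat.cast_zero, mul_zero, sub_zero]
      rw [D_zero]
      have : C (k:ℤ) (k:ℤ) = 1 := by rw [C_natCast, Nat.choose_self]; norm_num
      rw [this]
      norm_num
    · rcases eq_or_ne r k with h1 | h1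
      · subst h1
        rw [if_neg h0, if_pos rfl]
        have hD : D (r:ℤ) (r:ℤ) = -1 := by
          unfold D
          have b1 : ((r:ℤ) - r) = 0 := by ring
          rw [b1]
          have b2 : C 0 (r:ℤ) = 0 := by
            have e : ((0:ℕ):ℤ) = (0:ℤ) := by norm_num
            rw [← e]; exact C_natCast_eq_zero (by omega)
          obtain ⟨s, hs⟩ : ∃ s : ℕ, r = s + 1 := ⟨r - 1, by omega⟩
          have b3 : C (0-1) ((r:ℤ)-1) = (-1)^s := by
            unfold C
            rw [if_neg (by omega), if_neg (by omega)]
            have c1 : ((r:ℤ) - 1 - (0-1) - 1).toNat = s := by omega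
            have c2 : ((r:ℤ)-1).toNat = s := by omega
            rw [c1, c2, Nat.choose_self]
            norm_num
          rw [b2, b3]
          have c3 : (r:ℤ).toNat = s + 1 := by omega
          rw [c3, pow_succ]
          have hsq : ((-1:ℤ))^s * (-1)^s = 1 := by
            rw [← pow_add, ← two_mul, pow_mul]; norm_num
          linear_combination -hsq
        have hC : C ((r:ℤ) - 2*r) ((r:ℤ) - r) = 1 := by
          have e : ((r:ℤ) - (r:ℤ)) = 0 := by ring
          rw [e, C_zero_right]
        rw [hC, hD]
        ring
      · -- 0 < r < k
        rw [if_neg h0, if_neg h1]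
        rcases le_or_gt (2*r) k with h2 | h2
        · have hc : C ((k:ℤ) - 2*r) ((k:ℤ) - r) = 0 :=
            C_eq_zero_of_lt (by push_cast; omega) (by push_cast; omega)
          rw [hc, mul_zero]
          norm_num
        · have hD : D (k:ℤ) (r:ℤ) = 0 := by
            unfold D
            have b1 : C ((k:ℤ) - r) r = 0 :=
              C_eq_zero_of_lt (by push_cast; omega) (by push_cast; omega)
            have b2 : C ((k:ℤ) - r - 1) ((r:ℤ) - 1) = 0 :=
              C_eq_zero_of_lt (by push_cast; omega) (by push_cast; omega)
            rw [b1, b2]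
            ring
          rw [hD, zero_mul]
          norm_num
  rw [Finset.sum_congr rfl key, Finset.sum_add_distrib]
  rw [Finset.sum_ite_eq' (Finset.range (k+1)) 0 (fun _ => (1:ℤ)),
      Finset.sum_ite_eq' (Finset.range (k+1)) k (fun _ => (-1:ℤ))]
  simp

lemma U_eq : ∀ (k : ℕ) (n : ℤ), (k:ℤ) ≤ n → U n k = if k = 0 then 1 else 0 := by
  intro k
  induction k with
  | zero => intro n _; simp [U_zero]
  | succ j ih =>
    intro n hn
    rw [if_neg (by omega)]
    refine Int.le_induction (motive := fun n _ => U n (j+1) = 0) ?_ ?_ n hn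
    · exact U_anchor (j+1) (by omega)
    · intro n hn ihn
      have hrec := U_rec (n+1) j
      have e1 : n + 1 - 1 = n := by ring
      have e2 : n + 1 - 2 = n - 1 := by ring
      rw [e1, e2] at hrec
      rw [hrec, ihn]
      have v1 := ih n (by push_cast at hn ⊢; omega)
      have v2 := ih (n-1) (by push_cast at hn ⊢; omega)
      rw [v1, v2]
      ring

theorem stmt_3 (f g : ℕ → ℂ)
    (h : ∀ n : ℕ, f n = ∑ r ∈ Finset.range (n / 2 + 1), (C n r : ℂ) * g (n - 2 * r)) :
    ∀ n : ℕ, g n = ∑ r ∈ Finset.range (n / 2 + 1), (D n r : ℂ) * f (n - 2 * r) := by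
  intro n
  symm
  calc ∑ r ∈ Finset.range (n / 2 + 1), (D n r : ℂ) * f (n - 2 * r)
      = ∑ r ∈ Finset.range (n / 2 + 1), ∑ s ∈ Finset.range ((n - 2*r)/2 + 1),
          ((D (n:ℤ) (r:ℤ) : ℂ) * (C ((n - 2*r : ℕ):ℤ) (s:ℤ) : ℂ)) * g (n - 2*r - 2*s) := by
        apply Finset.sum_congr rfl
        intro r hr
        rw [h (n - 2*r), Finset.mul_sum]
        apply Finset.sum_congr rfl
        intro s hs
        ring
    _ = ∑ p ∈ (Finset.range (n/2+1)).sigma (fun r => Finset.range ((n - 2*r)/2 + 1)),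
          ((D (n:ℤ) (p.1:ℤ) : ℂ) * (C ((n - 2*p.1 : ℕ):ℤ) (p.2:ℤ) : ℂ)) * g (n - 2*p.1 - 2*p.2) := by
        rw [Finset.sum_sigma']
    _ = ∑ p ∈ (Finset.range (n/2+1)).sigma (fun k => Finset.range (k + 1)),
          ((D (n:ℤ) (p.2:ℤ) : ℂ) * (C ((n - 2*p.2 : ℕ):ℤ) ((p.1 - p.2 : ℕ):ℤ) : ℂ)) * g (n - 2*p.1) := by
        apply Finset.sum_nbij' (fun p => (⟨p.1 + p.2, p.1⟩ : (_ : ℕ) × ℕ))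
          (fun p => (⟨p.2, p.1 - p.2⟩ : (_ : ℕ) × ℕ))
        · intro p hp
          simp only [Finset.mem_sigma, Finset.mem_range] at hp ⊢
          omega
        · intro p hp
          simp only [Finset.mem_sigma, Finset.mem_range] at hp ⊢
          omega
        · intro p hp
          simp only [Finset.mem_sigma, Finset.mem_range] at hp
          simp only [Nat.add_sub_cancel_left]
        · intro p hp
          simp only [Finset.mem_sigma, Finset.mem_range] at hp
          have : p.2 + (p.1 - p.2) = p.1 := by omega
          simp only [this]
        · intro p hp
          simp only [Finset.mem_sigma, Finset.mem_range] at hp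
          rw [show p.1 + p.2 - p.1 = p.2 by omega, show n - 2*(p.1 + p.2) = n - 2*p.1 - 2*p.2 by omega]
    _ = ∑ k ∈ Finset.range (n/2+1), ∑ r ∈ Finset.range (k+1),
          ((D (n:ℤ) (r:ℤ) : ℂ) * (C ((n - 2*r : ℕ):ℤ) ((k - r : ℕ):ℤ) : ℂ)) * g (n - 2*k) := by
        rw [Finset.sum_sigma]
    _ = ∑ k ∈ Finset.range (n/2+1), (if k = 0 then (1:ℂ) else 0) * g (n - 2*k) := by
        apply Finset.sum_congr rfl
        intro k hk
        simp only [Finset.mem_range] at hk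
        rw [← Finset.sum_mul]
        congr 1
        have e0 : ∑ r ∈ Finset.range (k+1),
            (D (n:ℤ) (r:ℤ) : ℂ) * (C ((n - 2*r : ℕ):ℤ) ((k - r : ℕ):ℤ) : ℂ)
            = ((U (n:ℤ) k : ℤ) : ℂ) := by
          unfold U
          push_cast
          apply Finset.sum_congr rfl
          intro r hr
          simp only [Finset.mem_range] at hr
          rw [show ((n - 2*r : ℕ):ℤ) = (n:ℤ) - 2*(r:ℤ) by
            rw [Nat.cast_sub (by omega)]; push_cast; ring]
          rw [show ((k - r : ℕ):ℤ) = (k:ℤ) - (r:ℤ) by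
            rw [Nat.cast_sub (by omega)]]
        rw [e0, U_eq k (n:ℤ) (by exact_mod_cast Nat.le_of_lt_succ (by omega) |>.trans (Nat.div_le_self n 2))]
        split_ifs <;> norm_num
    _ = g n := by
        simp only [ite_mul, one_mul, zero_mul]
        rw [Finset.sum_ite_eq' (Finset.range (n/2+1)) 0 (fun k => g (n - 2*k))]
        simp
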